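/- For each k ≥ 1 and L ≥ 0, the unique polynomial p over ℚ of degree L+k+1 satisfying p(N) = S_k^{(L)}(N) for all positive integers N has roots at 0, −1, −2, …, −(L+1); equivalently, p(x) is divisible by x(x+1)(x+2)⋯(x+L+1) in ℚ[x]. -/

import Mathlib

open Finset Polynomial

/-- The hypersum: `hyperSum k 0 N = ∑_{n=1}^N n^k` and
`hyperSum k (L+1) N = ∑_{n=1}^N hyperSum k L n`. -/
def hyperSum (k : ℕ) : ℕ → ℕ → ℚ
  | 0, N => ∑ n ∈ Finset.Icc 1 N, (n : ℚ) ^ k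
  | L + 1, N => ∑ n ∈ Finset.Icc 1 N, hyperSum k L n

private lemma exists_delta_aux : ∀ n : ℕ, ∀ h : ℚ[X], h.natDegree ≤ n →
    ∃ F : ℚ[X], F.comp (X + 1) - F = h := by
  intro n
  induction n using Nat.strong_induction_on with
  | _ n ih => ?_
  intro h hdeg
  by_cases h0 : h = 0
  · exact ⟨0, by simp [h0]⟩
  set d := h.natDegree with hd
  set F₀ : ℚ[X] := C (h.leadingCoeff / (d + 1)) * X ^ (d + 1) with hF₀
  set D : ℚ[X] := F₀.comp (X + 1) - F₀ with hD
  have hDcoeff : ∀ i, D.coeff i = h.leadingCoeff / (d + 1) *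
      (((d+1).choose i : ℚ) - if i = d + 1 then 1 else 0) := by
    intro i
    simp only [hD, hF₀, Polynomial.mul_comp, Polynomial.C_comp, Polynomial.pow_comp,
      Polynomial.X_comp, Polynomial.coeff_sub, Polynomial.coeff_C_mul,
      Polynomial.coeff_X_pow, Polynomial.coeff_X_add_one_pow]
    rw [mul_sub]
  have hDdeg : D.natDegree ≤ d := by
    apply Polynomial.natDegree_le_iff_coeff_eq_zero.mpr
    intro i hi
    rw [hDcoeff i]
    rcases lt_or_eq_of_le (Nat.succ_le_of_lt hi) with h1 | h1
    · rw [Nat.choose_eq_zero_of_lt h1, if_neg (by omega)]; ring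
    · rw [if_pos h1.symm, ← h1]; simp
  have hDd : D.coeff d = h.leadingCoeff := by
    rw [hDcoeff d, if_neg (by omega), Nat.choose_succ_self_right]
    have : ((d : ℚ) + 1) ≠ 0 := by positivity
    push_cast
    field_simp
    ring
  set r : ℚ[X] := h - D with hr
  by_cases hr0 : r = 0
  · exact ⟨F₀, by rw [← hD]; linear_combination (norm := ring_nf) -hr0 + hr⟩
  · have hrd : r.natDegree < d := by
      have h1 : r.natDegree ≤ d := le_trans (Polynomial.natDegree_sub_le _ _)
        (max_le le_rfl hDdeg)
      have h2 : r.coeff d = 0 := by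
        have hcn : h.coeff d = h.leadingCoeff := by
          rw [hd]; exact Polynomial.coeff_natDegree
        rw [hr, Polynomial.coeff_sub, hDd, hcn, sub_self]
      rcases lt_or_eq_of_le h1 with h3 | h3
      · exact h3
      · have hne := Polynomial.leadingCoeff_ne_zero.mpr hr0
        rw [Polynomial.leadingCoeff, h3, h2] at hne
        exact absurd rfl hne
    have hdpos : 0 < d := by
      rcases Nat.eq_zero_or_pos d with h4 | h4
      · omega
      · exact h4
    obtain ⟨F₁, hF₁⟩ := ih r.natDegree (by omega) r le_rfl
    exact ⟨F₀ + F₁, by rw [Polynomial.add_comp]; linear_combination hF₁ + hD⟩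

private lemma exists_antideriv (g : ℚ[X]) :
    ∃ F : ℚ[X], F.eval 0 = 0 ∧ ∀ x : ℚ, F.eval (x + 1) = F.eval x + g.eval (x + 1) := by
  obtain ⟨F, hF⟩ := exists_delta_aux (g.comp (X + 1)).natDegree (g.comp (X + 1)) le_rfl
  refine ⟨F - C (F.eval 0), by simp, fun x => ?_⟩
  have := congrArg (Polynomial.eval x) hF
  simp only [Polynomial.eval_sub, Polynomial.eval_comp, Polynomial.eval_add,
    Polynomial.eval_X, Polynomial.eval_one, Polynomial.eval_C] at this ⊢
  linarith

/-- Canonical polynomial representing the hypersum. -/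
private noncomputable def hpoly (k : ℕ) : ℕ → ℚ[X]
  | 0 => Classical.choose (exists_antideriv (X ^ k))
  | L + 1 => Classical.choose (exists_antideriv (hpoly k L))

private lemma hpoly_zero (k L : ℕ) : (hpoly k L).eval 0 = 0 := by
  cases L with
  | zero => exact (Classical.choose_spec (exists_antideriv (X ^ k : ℚ[X]))).1
  | succ L => exact (Classical.choose_spec (exists_antideriv (hpoly k L))).1

private lemma hpoly_step_zero (k : ℕ) (x : ℚ) :
    (hpoly k 0).eval (x + 1) = (hpoly k 0).eval x + (x + 1) ^ k := by
  have := (Classical.choose_spec (exists_antideriv (X ^ k : ℚ[X]))).2 x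
  simpa [hpoly] using this

private lemma hpoly_step_succ (k L : ℕ) (x : ℚ) :
    (hpoly k (L + 1)).eval (x + 1) = (hpoly k (L + 1)).eval x + (hpoly k L).eval (x + 1) := by
  have := (Classical.choose_spec (exists_antideriv (hpoly k L))).2 x
  simpa [hpoly] using this

private lemma hpoly_eval (k : ℕ) : ∀ L N : ℕ, (hpoly k L).eval (N : ℚ) = hyperSum k L N := by
  intro L
  induction L with
  | zero =>
    intro N
    induction N with
    | zero => simp [hyperSum, hpoly_zero]
    | succ N ihN =>
      push_cast
      rw [hpoly_step_zero k (N : ℚ), ihN]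
      simp only [hyperSum]
      rw [Finset.sum_Icc_succ_top (by omega)]
      simp only [hyperSum] at *
      push_cast
      ring
  | succ L ihL =>
    intro N
    induction N with
    | zero => simp [hyperSum, hpoly_zero]
    | succ N ihN =>
      push_cast
      rw [hpoly_step_succ k L (N : ℚ), ihN]
      simp only [hyperSum]
      rw [Finset.sum_Icc_succ_top (by omega)]
      have h2 : (hpoly k L).eval ((N : ℚ) + 1) = hyperSum k L (N + 1) := by
        have := ihL (N + 1)
        push_cast at this
        exact this
      rw [h2]

private lemma hpoly_root (k : ℕ) (hk : 1 ≤ k) :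
    ∀ L, ∀ j : ℕ, j ≤ L + 1 → (hpoly k L).eval (-(j : ℚ)) = 0 := by
  intro L
  induction L with
  | zero =>
    intro j hj
    interval_cases j
    · simpa using hpoly_zero k 0
    · have hstep := hpoly_step_zero k (-1 : ℚ)
      have h0 := hpoly_zero k 0
      have hz : ((-1 : ℚ) + 1) ^ k = 0 := by
        rw [neg_add_cancel, zero_pow (by omega)]
      rw [hz] at hstep
      norm_num at hstep ⊢
      linarith
  | succ L ihL =>
    intro j hj
    induction j with
    | zero => simpa using hpoly_zero k (L + 1)
    | succ j ihj =>
      have hstep := hpoly_step_succ k L (-((j : ℚ) + 1))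
      have h1 : (-((j : ℚ) + 1)) + 1 = -(j : ℚ) := by ring
      rw [h1] at hstep
      have h2 : (hpoly k (L + 1)).eval (-(j : ℚ)) = 0 := ihj (by omega)
      have h3 : (hpoly k L).eval (-(j : ℚ)) = 0 := ihL j (by omega)
      rw [h2, h3] at hstep
      push_cast
      linarith

theorem hyperSum_poly_roots (k L : ℕ) (hk : 1 ≤ k) (p : Polynomial ℚ)
    (hdeg : p.natDegree = L + k + 1)
    (hval : ∀ N : ℕ, 1 ≤ N → p.eval (N : ℚ) = hyperSum k L N) :
    (∀ j : ℕ, j ≤ L + 1 → p.eval (-(j : ℚ)) = 0) ∧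
      (∏ j ∈ Finset.range (L + 2), (Polynomial.X + Polynomial.C (j : ℚ))) ∣ p := by
  have hpq : p = hpoly k L := by
    apply Polynomial.eq_of_infinite_eval_eq
    apply Set.infinite_of_injective_forall_mem (f := fun n : ℕ => ((n + 1 : ℕ) : ℚ))
    · intro a b hab
      simpa using hab
    · intro n
      show p.eval _ = _
      rw [hval (n + 1) (by omega), hpoly_eval]
  have hroots : ∀ j : ℕ, j ≤ L + 1 → p.eval (-(j : ℚ)) = 0 := by
    intro j hj
    rw [hpq]
    exact hpoly_root k hk L j hj
  refine ⟨hroots, ?_⟩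
  have hp0 : p ≠ 0 := by
    intro h
    rw [h] at hdeg
    simp at hdeg
  set m : Multiset ℚ := (Multiset.range (L + 2)).map (fun j : ℕ => -(j : ℚ)) with hm
  have hmnd : m.Nodup := Multiset.Nodup.map
    (fun a b hab => by field_simp at hab; exact_mod_cast neg_inj.mp hab)
    (Multiset.nodup_range _)
  have hmle : m ≤ p.roots := by
    rw [Multiset.le_iff_subset hmnd]
    intro a ha
    rw [hm, Multiset.mem_map] at ha
    obtain ⟨j, hj, rfl⟩ := ha
    rw [Polynomial.mem_roots hp0]
    exact hroots j (by have := Multiset.mem_range.mp hj; omega)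
  have hdvd : (m.map (fun a => X - C a)).prod ∣ p :=
    dvd_trans (Multiset.prod_dvd_prod_of_le (Multiset.map_le_map hmle))
      (Polynomial.prod_multiset_X_sub_C_dvd p)
  have heq : (∏ j ∈ Finset.range (L + 2), (X + C (j : ℚ)))
      = (m.map (fun a => X - C a)).prod := by
    rw [Finset.prod_eq_multiset_prod, hm, Multiset.map_map]
    congr 1
    apply Multiset.map_congr
    · rfl
    · intro j _
      simp [Function.comp, map_natCast, sub_neg_eq_add]
  rw [heq]
  exact hdvd
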